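/- Let G be a topological group and let (μ_i)_{i∈I} be a net of Borel probability measures on G that UEB-converges to invariance. For each i, let C_i be a Borel subset of G with μ_i(C_i) = 1. Then the union over i of the sets C_i · C_i⁻¹ is dense in G. -/

import Mathlib

open Filter Topology MeasureTheory Pointwise Set Uniformity

open SetRel in
lemma exists_pseudo_dist {X : Type*} (V : ℕ → Set (X × X))
    (hrefl : ∀ n x, (x, x) ∈ V n)
    (hsymm : ∀ n, ∀ p ∈ V n, Prod.swap p ∈ V n)
    (hcomp : ∀ n, V (n + 1) ○ V (n + 1) ⊆ V n)
    (hanti : ∀ n, V (n + 1) ⊆ V n) :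
    ∃ ρ : X → X → ℝ, (∀ x, ρ x x = 0) ∧ (∀ x y, 0 ≤ ρ x y) ∧ (∀ x y, ρ x y = ρ y x) ∧
      (∀ x y z, ρ x z ≤ ρ x y + ρ y z) ∧
      (∀ n, ∃ δ > (0:ℝ), ∀ x y, ρ x y < δ → (x, y) ∈ V n) ∧
      (∀ ε > (0:ℝ), ∃ n, ∀ x y, (x, y) ∈ V n → ρ x y < ε) := by
  classical
  have hVanti : Antitone V := antitone_nat_of_succ_le hanti
  set F : Filter (X × X) := ⨅ n, 𝓟 (V n) with hF
  have hdir : Directed (· ≥ ·) V := fun m n =>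
    ⟨max m n, hVanti (le_max_left m n), hVanti (le_max_right m n)⟩
  have hB : F.HasBasis (fun _ : ℕ => True) V := by
    simpa using hasBasis_iInf_principal hdir (ι := ℕ)
  have hmemF : ∀ n, V n ∈ F := fun n => hB.mem_of_mem trivial
  let core : UniformSpace.Core X := UniformSpace.Core.mk' F
    (fun r hr x => by
      obtain ⟨n, -, hn⟩ := hB.mem_iff.1 hr
      exact hn (hrefl n x))
    (fun r hr => by
      obtain ⟨n, -, hn⟩ := hB.mem_iff.1 hr
      exact mem_of_superset (hmemF n) fun p hp => hn (hsymm n p hp))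
    (fun r hr => by
      obtain ⟨n, -, hn⟩ := hB.mem_iff.1 hr
      exact ⟨V (n + 1), hmemF (n + 1), (hcomp n).trans hn⟩)
  letI u : UniformSpace X := .ofCore core
  have huni : 𝓤 X = F := rfl
  have hB' : (𝓤 X).HasBasis (fun _ : ℕ => True) V := huni ▸ hB
  haveI : (𝓤 X).IsCountablyGenerated := hB'.isCountablyGenerated
  letI m : PseudoMetricSpace X := UniformSpace.pseudoMetricSpace X
  refine ⟨dist, dist_self, fun x y => dist_nonneg, dist_comm, dist_triangle, ?_, ?_⟩
  · intro n
    have hmem : V n ∈ 𝓤 X := huni ▸ hmemF n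
    obtain ⟨ε, hε, hsub⟩ := Metric.uniformity_basis_dist.mem_iff.1 hmem
    exact ⟨ε, hε, fun x y h => hsub h⟩
  · intro ε hε
    have hmem : {p : X × X | dist p.1 p.2 < ε} ∈ 𝓤 X :=
      Metric.uniformity_basis_dist.mem_of_mem hε
    obtain ⟨n, -, hn⟩ := hB'.mem_iff.1 hmem
    exact ⟨n, fun x y h => hn h⟩

lemma exists_bump {G : Type*} [Group G] [TopologicalSpace G] [IsTopologicalGroup G]
    {W : Set G} (hW : W ∈ 𝓝 (1 : G)) :
    ∃ f : G → ℝ, f 1 = 1 ∧ (∀ x, 0 ≤ f x) ∧ (∀ x, f x ≤ 1) ∧ (∀ x, x ∉ W → f x = 0) ∧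
      (∀ ε > (0:ℝ), ∃ U ∈ 𝓝 (1 : G), ∀ x y : G, y * x⁻¹ ∈ U → |f x - f y| ≤ ε) := by
  classical
  have key : ∀ S : Set G, S ∈ 𝓝 (1 : G) →
      ∃ T, T ∈ 𝓝 (1 : G) ∧ T = T⁻¹ ∧ T * T ⊆ S := by
    intro S hS
    obtain ⟨V₁, hopen, hmem, hmul⟩ := exists_open_nhds_one_mul_subset hS
    refine ⟨V₁ ∩ V₁⁻¹, inter_mem (hopen.mem_nhds hmem)
      ((hopen.inv.mem_nhds) (by simpa using hmem)), ?_, ?_⟩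
    · rw [Set.inter_inv, inv_inv, Set.inter_comm]
    · exact (Set.mul_subset_mul Set.inter_subset_left Set.inter_subset_left).trans hmul
  choose! T hT1 hT2 hT3 using key
  set U : ℕ → Set G := fun n => T^[n + 1] W with hU
  have hUsucc : ∀ n, U (n + 1) = T (U n) := fun n => Function.iterate_succ_apply' T (n + 1) W
  have hU0 : U 0 = T W := by simp [hU]
  have hUmem : ∀ n, U n ∈ 𝓝 (1 : G) := by
    intro n
    induction n with
    | zero => rw [hU0]; exact hT1 W hW
    | succ k ih => rw [hUsucc]; exact hT1 _ ih
  have hUone : ∀ n, (1 : G) ∈ U n := fun n => mem_of_mem_nhds (hUmem n)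
  have hUsymm : ∀ n, U n = (U n)⁻¹ := by
    intro n
    cases n with
    | zero => rw [hU0]; exact hT2 W hW
    | succ k => rw [hUsucc]; exact hT2 _ (hUmem k)
  have hUmul : ∀ n, U (n + 1) * U (n + 1) ⊆ U n := by
    intro n; rw [hUsucc]; exact hT3 _ (hUmem n)
  have hU0W : U 0 ⊆ W := by
    have h := hT3 W hW
    rw [← hU0] at h
    intro a ha
    simpa using h (Set.mul_mem_mul ha (hUone 0))
  set V : ℕ → Set (G × G) := fun n => {p : G × G | p.2 * p.1⁻¹ ∈ U n} with hV
  obtain ⟨ρ, hρself, hρnonneg, hρcomm, hρtri, hρlow, hρup⟩ :=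
    exists_pseudo_dist V
      (fun n x => by simp [hV, hUone n])
      (by
        rintro n ⟨a, b⟩ h
        simp only [hV, Set.mem_setOf_eq] at h ⊢
        rw [hUsymm n, Set.mem_inv]
        simpa [mul_inv_rev] using h)
      (by
        rintro n ⟨a, c⟩ ⟨b, hab, hbc⟩
        simp only [hV, Set.mem_setOf_eq] at hab hbc ⊢
        have : (c * b⁻¹) * (b * a⁻¹) ∈ U (n + 1) * U (n + 1) := Set.mul_mem_mul hbc hab
        simpa [mul_assoc] using hUmul n this)
      (by
        intro n p hp
        simp only [hV, Set.mem_setOf_eq] at hp ⊢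
        simpa using hUmul n (Set.mul_mem_mul hp (hUone (n + 1))))
  obtain ⟨δ, hδ, hδV⟩ := hρlow 0
  refine ⟨fun x => max 0 (1 - ρ 1 x / δ), by simp [hρself], fun x => le_max_left _ _, ?_, ?_, ?_⟩
  · intro x
    have : 1 - ρ 1 x / δ ≤ 1 := by
      have := div_nonneg (hρnonneg 1 x) hδ.le
      linarith
    exact max_le (by norm_num) this
  · intro x hx
    have hρx : δ ≤ ρ 1 x := by
      by_contra h
      push_neg at h
      have := hδV 1 x h
      simp only [hV, Set.mem_setOf_eq, inv_one, mul_one] at this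
      exact hx (hU0W this)
    have : 1 - ρ 1 x / δ ≤ 0 := by
      have : 1 ≤ ρ 1 x / δ := (one_le_div hδ).2 hρx
      linarith
    exact max_eq_left this
  · intro ε hε
    obtain ⟨n, hn⟩ := hρup (ε * δ) (by positivity)
    refine ⟨U n, hUmem n, fun x y hxy => ?_⟩
    have hρxy : ρ x y < ε * δ := hn x y (by simpa [hV] using hxy)
    have habs : |ρ 1 x - ρ 1 y| ≤ ρ x y := by
      rw [abs_sub_le_iff]
      constructor
      · have := hρtri 1 y x
        rw [hρcomm y x] at this
        linarith
      · have := hρtri 1 x y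
        linarith
    have h1 : |(1 - ρ 1 x / δ) - (1 - ρ 1 y / δ)| ≤ ε := by
      have : (1 - ρ 1 x / δ) - (1 - ρ 1 y / δ) = (ρ 1 y - ρ 1 x) / δ := by ring
      rw [this, abs_div, abs_of_pos hδ, div_le_iff₀ hδ]
      calc |ρ 1 y - ρ 1 x| = |ρ 1 x - ρ 1 y| := abs_sub_comm _ _
        _ ≤ ρ x y := habs
        _ ≤ ε * δ := hρxy.le
    calc |max 0 (1 - ρ 1 x / δ) - max 0 (1 - ρ 1 y / δ)|
        = |max (1 - ρ 1 x / δ) 0 - max (1 - ρ 1 y / δ) 0| := by rw [max_comm, max_comm 0]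
      _ ≤ |(1 - ρ 1 x / δ) - (1 - ρ 1 y / δ)| := abs_max_sub_max_le_abs _ _ _
      _ ≤ ε := h1


/-- A net `(μ i)` of Borel probability measures on a topological group `G`
UEB-converges to invariance if, for every `g ∈ G` and every norm-bounded,
right-uniformly equicontinuous family `H` of bounded right-uniformly continuous
real-valued functions on `G`, `sup_{f ∈ H} |∫ f ∘ λ_g dμ_i − ∫ f dμ_i| → 0`. -/
def UEBConvergesToInvariance {G ι : Type*} [Group G] [TopologicalSpace G]
    [MeasurableSpace G] (l : Filter ι) (μ : ι → Measure G) : Prop :=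
  ∀ (g : G) (H : Set (G → ℝ)),
    (∃ C : ℝ, ∀ f ∈ H, ∀ x, |f x| ≤ C) →
    (∀ ε > 0, ∃ U ∈ 𝓝 (1 : G), ∀ f ∈ H, ∀ x y : G, y * x⁻¹ ∈ U → |f x - f y| ≤ ε) →
    ∀ ε > 0, ∀ᶠ i in l, ∀ f ∈ H,
      |∫ x, f (g * x) ∂(μ i) - ∫ x, f x ∂(μ i)| ≤ ε

/-- If `(μ i)` UEB-converges to invariance over `G` and `C i` are Borel sets of full
measure, then `⋃ i, C i · (C i)⁻¹` is dense in `G`. -/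
theorem stmt8 {G ι : Type*} [Group G] [TopologicalSpace G] [IsTopologicalGroup G]
    [MeasurableSpace G] [BorelSpace G] (l : Filter ι) [l.NeBot]
    (μ : ι → Measure G) (hprob : ∀ i, IsProbabilityMeasure (μ i))
    (hUEB : UEBConvergesToInvariance l μ)
    (C : ι → Set G) (hmeas : ∀ i, MeasurableSet (C i)) (hC : ∀ i, μ i (C i) = 1) :
    Dense (⋃ i, C i * (C i)⁻¹) := by
  rw [dense_iff_inter_open]
  intro Vo hVo hVne
  obtain ⟨g, hg⟩ := hVne
  by_contra hempty
  rw [Set.not_nonempty_iff_eq_empty] at hempty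
  have hdisj : ∀ i, ∀ x ∈ C i, ∀ c ∈ C i, x * c⁻¹ ∉ Vo := by
    intro i x hx c hc hmem
    have : x * c⁻¹ ∈ Vo ∩ ⋃ i, C i * (C i)⁻¹ :=
      ⟨hmem, Set.mem_iUnion.2 ⟨i, Set.mul_mem_mul hx (Set.inv_mem_inv.2 hc)⟩⟩
    rw [hempty] at this
    exact this
  -- the neighborhood `W` of 1 with `W * g ⊆ Vo`
  set W : Set G := (fun w => w * g) ⁻¹' Vo with hWdef
  have hWmem : W ∈ 𝓝 (1 : G) :=
    (hVo.preimage (continuous_mul_right g)).mem_nhds (by simpa [hWdef] using hg)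
  obtain ⟨f, hf1, hf0, hfle, hfsupp, hfmod⟩ := exists_bump hWmem
  -- the UEB family
  set H : Set (G → ℝ) :=
    {F | ∃ D : Set G, D.Nonempty ∧ F = fun x => ⨆ c : D, f (x * (c : G)⁻¹)} with hHdef
  have bdd : ∀ (D : Set G) (x : G), BddAbove (Set.range fun c : D => f (x * (c : G)⁻¹)) :=
    fun D x => ⟨1, by rintro _ ⟨c, rfl⟩; exact hfle _⟩
  have hbound : ∀ F ∈ H, ∀ x, |F x| ≤ 1 := by
    rintro F ⟨D, hD, rfl⟩ x
    haveI : Nonempty D := hD.to_subtype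
    rw [abs_le]
    constructor
    · obtain ⟨c, hc⟩ := hD
      have h1 := le_ciSup (bdd D x) (⟨c, hc⟩ : D)
      have h2 := hf0 (x * c⁻¹)
      simp only at h1
      linarith
    · exact ciSup_le fun c => hfle _
  have hequi : ∀ ε > (0:ℝ), ∃ U ∈ 𝓝 (1 : G), ∀ F ∈ H, ∀ x y : G,
      y * x⁻¹ ∈ U → |F x - F y| ≤ ε := by
    intro ε hε
    obtain ⟨U, hU, hUf⟩ := hfmod ε hε
    refine ⟨U, hU, ?_⟩
    rintro F ⟨D, hD, rfl⟩ x y hxy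
    haveI : Nonempty D := hD.to_subtype
    have key : ∀ c : D, |f (x * (c : G)⁻¹) - f (y * (c : G)⁻¹)| ≤ ε := by
      intro c
      apply hUf
      simp only [mul_inv_rev, inv_inv]
      rw [show y * (c : G)⁻¹ * ((c : G) * x⁻¹) = y * x⁻¹ by group]
      exact hxy
    rw [abs_sub_le_iff]
    constructor
    · rw [sub_le_iff_le_add]
      refine ciSup_le fun c => ?_
      have h1 := (abs_sub_le_iff.1 (key c)).1
      have h2 := le_ciSup (bdd D y) c
      linarith
    · rw [sub_le_iff_le_add]
      refine ciSup_le fun c => ?_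
      have h1 := (abs_sub_le_iff.1 (key c)).2
      have h2 := le_ciSup (bdd D x) c
      linarith
  have hev := hUEB g H ⟨1, hbound⟩ hequi (1/2) (by norm_num)
  obtain ⟨i, hi⟩ := hev.exists
  haveI := hprob i
  have hCne : (C i).Nonempty :=
    nonempty_of_measure_ne_zero (by rw [hC i]; exact one_ne_zero)
  set D : Set G := (fun c => g * c) '' C i with hDdef
  have hD : D.Nonempty := hCne.image _
  haveI : Nonempty D := hD.to_subtype
  set F : G → ℝ := fun x => ⨆ c : D, f (x * (c : G)⁻¹) with hFdef
  have hF : F ∈ H := ⟨D, hD, rfl⟩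
  have hFnonneg : ∀ x, 0 ≤ F x := by
    intro x
    obtain ⟨c, hc⟩ := hD
    have h1 := le_ciSup (bdd D x) (⟨c, hc⟩ : D)
    have h2 := hf0 (x * c⁻¹)
    simp only at h1
    exact le_trans h2 h1
  have hzero : ∀ x ∈ C i, F x = 0 := by
    intro x hx
    have hterm : ∀ c : D, f (x * (c : G)⁻¹) = 0 := by
      rintro ⟨-, c, hc, rfl⟩
      by_contra hne
      have hin : x * (g * c)⁻¹ ∈ W := by
        by_contra hnin
        exact hne (hfsupp _ hnin)
      have : x * c⁻¹ ∈ Vo := by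
        have h := hin
        rw [hWdef, Set.mem_preimage] at h
        rw [show x * (g * c)⁻¹ * g = x * c⁻¹ by group] at h
        exact h
      exact hdisj i x hx c hc this
    rw [hFdef]
    simp only
    rw [show (fun c : D => f (x * (c : G)⁻¹)) = fun _ : D => (0:ℝ) from funext hterm]
    exact ciSup_const
  have hone : ∀ x ∈ C i, (1:ℝ) ≤ F (g * x) := by
    intro x hx
    have hc : (g * x : G) ∈ D := ⟨x, hx, rfl⟩
    have h1 := le_ciSup (bdd D (g * x)) (⟨g * x, hc⟩ : D)
    simp only at h1
    rw [show g * x * (g * x)⁻¹ = 1 by group, hf1] at h1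
    exact h1
  -- continuity of f
  have hfcont : Continuous f := by
    rw [continuous_iff_continuousAt]
    intro x₀
    refine Metric.tendsto_nhds.2 fun ε hε => ?_
    obtain ⟨U, hU, hUf⟩ := hfmod (ε/2) (half_pos hε)
    have hnb : (fun x => x * x₀⁻¹) ⁻¹' U ∈ 𝓝 x₀ := by
      have hc := (continuous_mul_right x₀⁻¹).continuousAt (x := x₀)
      exact hc (by simpa using hU)
    filter_upwards [hnb] with x hx
    rw [Real.dist_eq]
    have h := hUf x₀ x hx
    calc |f x - f x₀| = |f x₀ - f x| := abs_sub_comm _ _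
      _ ≤ ε/2 := h
      _ < ε := half_lt_self hε
  have hFmeas : Measurable F := by
    apply measurable_of_Ioi
    intro a
    have heq : F ⁻¹' Set.Ioi a = ⋃ c : D, {x | a < f (x * (c : G)⁻¹)} := by
      ext x
      simp only [Set.mem_preimage, Set.mem_Ioi, Set.mem_iUnion, Set.mem_setOf_eq, hFdef]
      exact lt_ciSup_iff (bdd D x)
    rw [heq]
    exact (isOpen_iUnion fun c =>
      (isOpen_lt continuous_const (hfcont.comp (continuous_mul_right _)))).measurableSet
  have hFint : Integrable F (μ i) := by
    refine ⟨hFmeas.aestronglyMeasurable, ?_⟩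
    apply HasFiniteIntegral.of_bounded (C := (1:ℝ))
    exact ae_of_all _ fun x => by rw [Real.norm_eq_abs]; exact hbound F hF x
  have hFgint : Integrable (fun x => F (g * x)) (μ i) := by
    refine ⟨(hFmeas.comp ((continuous_mul_left g).measurable)).aestronglyMeasurable, ?_⟩
    apply HasFiniteIntegral.of_bounded (C := (1:ℝ))
    exact ae_of_all _ fun x => by rw [Real.norm_eq_abs]; exact hbound F hF _
  have hnull : μ i ((C i)ᶜ) = 0 :=
    (prob_compl_eq_zero_iff (hmeas i)).2 (hC i)
  have hCae : ∀ᵐ x ∂(μ i), x ∈ C i := mem_ae_iff.2 (by simpa using hnull)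
  have hint0 : ∫ x, F x ∂(μ i) = 0 := by
    have hae : F =ᵐ[μ i] 0 := hCae.mono fun x hx => hzero x hx
    rw [integral_congr_ae hae]
    simp
  have hint1 : (1:ℝ) ≤ ∫ x, F (g * x) ∂(μ i) := by
    have hmono : ∀ x, (C i).indicator (1 : G → ℝ) x ≤ F (g * x) := by
      intro x
      by_cases hx : x ∈ C i
      · rw [Set.indicator_of_mem hx]; exact hone x hx
      · rw [Set.indicator_of_notMem hx]; exact hFnonneg _
    have hind : Integrable ((C i).indicator (1 : G → ℝ)) (μ i) :=
      (integrable_const (1:ℝ)).indicator (hmeas i)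
    have h1 : ∫ x, (C i).indicator (1 : G → ℝ) x ∂(μ i) = 1 := by
      rw [integral_indicator_one (hmeas i), measureReal_def, hC i]
      simp
    calc (1:ℝ) = ∫ x, (C i).indicator (1 : G → ℝ) x ∂(μ i) := h1.symm
      _ ≤ ∫ x, F (g * x) ∂(μ i) := integral_mono hind hFgint hmono
  have hfin := hi F hF
  rw [hint0, sub_zero] at hfin
  have := le_abs_self (∫ x, F (g * x) ∂(μ i))
  linarith
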